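/- arXiv:2106.01662 — 3 statements merged into one kernel-verified Lean document; each statement's English description precedes it below -/
import Mathlib

section
/- The key lemma: epi_s φ_𝓗 ⊆ 𝓐_𝓗 ⊆ epi φ_𝓗 ⊆ epi (f + δ_E)^*, where φ_𝓗(x*) := inf_{H∈𝓗, μ∈ℝ₊^H} (f + ∑_{t∈H} μ_t f_t)^*(x*), 𝓐_𝓗 := ⋃_{H∈𝓗, μ∈ℝ₊^H} epi (f + ∑_{t∈H} μ_t f_t)^*, and E = ⋂_{t∈T}{f_t ≤ 0}. -/
open scoped BigOperators Pointwise
open Classical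

/-- Fenchel–Legendre conjugate of an extended-real-valued function,
evaluated on the weak* dual. -/
noncomputable def conjFn {X : Type*} [AddCommGroup X] [Module ℝ X] [TopologicalSpace X]
    (g : X → EReal) (p : WeakDual ℝ X) : EReal :=
  ⨆ x : X, ((p x : ℝ) : EReal) - g x

/-- The Lagrangian `f + ∑_{t ∈ H} μ t • f_t` (with values in the extended reals,
using the convention `0 * (+∞) = 0`). -/
noncomputable def lagFn {X T : Type*} (f : X → EReal) (ft : T → X → EReal)
    (H : Finset T) (μ : T → ℝ) : X → EReal :=
  fun x => f x + ∑ t ∈ H, ((μ t : EReal) * ft t x)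

/-- `f + δ_E`, where `E = ⋂_{t ∈ T} {f_t ≤ 0}`. -/
noncomputable def fPlusIndicator {X T : Type*} (f : X → EReal) (ft : T → X → EReal) :
    X → EReal :=
  fun x => if ∀ t : T, ft t x ≤ 0 then f x else ⊤

/-- The epigraph (inside `X* × ℝ`) of the conjugate of `g`. -/
def epiConj {X : Type*} [AddCommGroup X] [Module ℝ X] [TopologicalSpace X]
    (g : X → EReal) : Set (WeakDual ℝ X × ℝ) :=
  {q | conjFn g q.1 ≤ (q.2 : EReal)}

/-- The set `𝓐_𝓗 = ⋃_{H ∈ 𝓗} ⋃_{μ ∈ ℝ₊^H} epi (f + ∑_{t∈H} μ_t f_t)^*`. -/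
def ASet {X T : Type*} [AddCommGroup X] [Module ℝ X] [TopologicalSpace X]
    (f : X → EReal) (ft : T → X → EReal) (𝓗 : Set (Finset T)) :
    Set (WeakDual ℝ X × ℝ) :=
  {q | ∃ H ∈ 𝓗, ∃ μ : T → ℝ, (∀ t ∈ H, 0 ≤ μ t) ∧ q ∈ epiConj (lagFn f ft H μ)}

/-- The convex cone generated by a set: `cone A = ℝ≥0 • (co A)`. -/
def coneGen {M : Type*} [AddCommMonoid M] [Module ℝ M] (A : Set M) : Set M :=
  {p | ∃ c : ℝ, 0 ≤ c ∧ ∃ q ∈ convexHull ℝ A, p = c • q}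

/-- `φ_𝓗(x*) = inf_{H ∈ 𝓗, μ ∈ ℝ₊^H} (f + ∑_{t∈H} μ_t f_t)^*(x*)`. -/
noncomputable def phiH {X T : Type*} [AddCommGroup X] [Module ℝ X] [TopologicalSpace X]
    (f : X → EReal) (ft : T → X → EReal) (𝓗 : Set (Finset T)) (p : WeakDual ℝ X) : EReal :=
  ⨅ H ∈ 𝓗, ⨅ μ : {μ : T → ℝ // ∀ t ∈ H, 0 ≤ μ t}, conjFn (lagFn f ft H μ.1) p

theorem key_inclusions {X T : Type*} [AddCommGroup X] [Module ℝ X] [TopologicalSpace X]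
    (f : X → EReal) (ft : T → X → EReal)
    (hf : ∀ x, f x ≠ ⊥) (hfprop : ∃ x, f x ≠ ⊤)
    (hft : ∀ t x, ft t x ≠ ⊥) (hftprop : ∀ t, ∃ x, ft t x ≠ ⊤)
    (𝓗 : Set (Finset T)) (h𝓗ne : 𝓗.Nonempty) (h𝓗mem : ∀ H ∈ 𝓗, H.Nonempty) :
    {q : WeakDual ℝ X × ℝ | phiH f ft 𝓗 q.1 < (q.2 : EReal)} ⊆ ASet f ft 𝓗 ∧
      ASet f ft 𝓗 ⊆ {q : WeakDual ℝ X × ℝ | phiH f ft 𝓗 q.1 ≤ (q.2 : EReal)} ∧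
      {q : WeakDual ℝ X × ℝ | phiH f ft 𝓗 q.1 ≤ (q.2 : EReal)} ⊆
        epiConj (fPlusIndicator f ft) := by
  refine ⟨?_, ?_, ?_⟩
  · intro q hq
    simp only [Set.mem_setOf_eq] at hq
    by_contra hnot
    refine absurd hq (not_lt.2 ?_)
    rw [phiH]
    refine le_iInf₂ fun H hH => le_iInf fun μ => ?_
    by_contra hlt
    exact hnot ⟨H, hH, μ.1, μ.2, le_of_lt (not_le.1 hlt)⟩
  · rintro q ⟨H, hH, μ, hμ, hq⟩
    have hq' : conjFn (lagFn f ft H μ) q.1 ≤ (q.2 : EReal) := hq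
    show phiH f ft 𝓗 q.1 ≤ (q.2 : EReal)
    refine le_trans ?_ hq'
    exact (iInf₂_le H hH).trans (iInf_le _ (⟨μ, hμ⟩ : {μ : T → ℝ // ∀ t ∈ H, 0 ≤ μ t}))
  · intro q hq
    simp only [Set.mem_setOf_eq] at hq
    refine le_trans ?_ hq
    refine le_trans ?_ (le_refl (phiH f ft 𝓗 q.1))
    rw [phiH]
    refine le_iInf₂ fun H hH => le_iInf fun μ => ?_
    -- conjugate antitone: lagFn ≤ fPlusIndicator
    refine iSup_mono fun x => ?_
    refine EReal.sub_le_sub le_rfl ?_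
    show lagFn f ft H μ.1 x ≤ fPlusIndicator f ft x
    unfold lagFn fPlusIndicator
    split_ifs with h
    · calc f x + ∑ t ∈ H, ((μ.1 t : EReal) * ft t x)
          ≤ f x + 0 := by
            refine add_le_add le_rfl ?_
            refine Finset.sum_nonpos fun t ht => ?_
            exact mul_nonpos_of_nonneg_of_nonpos (by exact_mod_cast μ.2 t ht) (h t)
        _ = f x := add_zero _
    · exact le_top
end

section
/- If 𝓗 is a covering family and {f; f_t, t∈T} are proper convex lsc functions, then the biconjugate identity (φ_𝓗)^* = f + δ_E holds, where φ_𝓗(x*) = inf_{H∈𝓗, μ∈ℝ₊^H} (f + ∑_{t∈H} μ_t f_t)^*(x*) and E = ⋂_{t∈T}{f_t ≤ 0}. -/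
open scoped BigOperators Pointwise
open Classical

/-- Conjugate of a function on the weak* dual, evaluated back on `X`. -/
noncomputable def conjBack {X : Type*} [AddCommGroup X] [Module ℝ X] [TopologicalSpace X]
    (g : WeakDual ℝ X → EReal) (x : X) : EReal :=
  ⨆ p : WeakDual ℝ X, ((p x : ℝ) : EReal) - g p


open Set

namespace ConjProofAux

lemma term_ne_bot {c : ℝ} (hc : 0 ≤ c) {v : EReal} (hv : v ≠ ⊥) : (c : EReal) * v ≠ ⊥ := by
  rcases hc.eq_or_lt with h | h
  · simp [← h]
  · induction v with
    | bot => exact absurd rfl hv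
    | coe a => rw [← EReal.coe_mul]; exact EReal.coe_ne_bot _
    | top => rw [EReal.mul_top_of_pos (by exact_mod_cast h)]; simp

lemma sum_ne_bot {T : Type*} {H : Finset T} {F : T → EReal} (h : ∀ t ∈ H, F t ≠ ⊥) :
    ∑ t ∈ H, F t ≠ ⊥ := by
  induction H using Finset.cons_induction with
  | empty => simp
  | cons a s ha ih =>
      rw [Finset.sum_cons, Ne, EReal.add_eq_bot_iff]
      push_neg
      exact ⟨h a (Finset.mem_cons_self a s), ih fun t ht => h t (Finset.mem_cons_of_mem ht)⟩

lemma sub_le_of_key (a : ℝ) (b c : EReal) (hc : c ≠ ⊥) (h : (a : EReal) - c ≤ b) :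
    (a : EReal) - b ≤ c := by
  induction c with
  | bot => exact absurd rfl hc
  | top => exact le_top
  | coe t =>
      have h' : ((a - t : ℝ) : EReal) ≤ b := by rwa [EReal.coe_sub]
      have := EReal.sub_le_sub (le_refl ((a : ℝ) : EReal)) h'
      calc (a : EReal) - b ≤ (a : EReal) - ((a - t : ℝ) : EReal) := this
        _ = ((a - (a - t) : ℝ) : EReal) := (EReal.coe_sub _ _).symm
        _ = (t : EReal) := by norm_num

variable {X : Type*} [AddCommGroup X] [Module ℝ X] [TopologicalSpace X]

lemma lsc_const_mul {g : X → EReal} (hg : LowerSemicontinuous g) {c : ℝ} (hc : 0 ≤ c) :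
    LowerSemicontinuous fun x => (c : EReal) * g x := by
  rcases hc.eq_or_lt with h | h
  · simp only [← h, EReal.coe_zero, zero_mul]; exact lowerSemicontinuous_const
  · have hc0 : (0 : EReal) < (c : EReal) := EReal.coe_pos.2 h
    rw [lowerSemicontinuous_iff_isOpen_preimage] at hg ⊢
    intro y
    have hset : (fun x => (c : EReal) * g x) ⁻¹' Ioi y = g ⁻¹' Ioi (y / (c : EReal)) := by
      ext x
      simp only [mem_preimage, mem_Ioi, ← not_le]
      rw [EReal.le_div_iff_mul_le hc0 (EReal.coe_ne_top c), mul_comm]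
    rw [hset]; exact hg _

lemma lsc_sum {T : Type*} (ft : T → X → EReal) (hft : ∀ t x, ft t x ≠ ⊥)
    (hlsc : ∀ t, LowerSemicontinuous (ft t)) (H : Finset T) (μ : T → ℝ)
    (hμ : ∀ t ∈ H, 0 ≤ μ t) :
    LowerSemicontinuous fun x => ∑ t ∈ H, (μ t : EReal) * ft t x := by
  induction H using Finset.cons_induction with
  | empty => simpa using lowerSemicontinuous_const
  | cons a s ha ih =>
      have h1 : LowerSemicontinuous fun x => (μ a : EReal) * ft a x :=
        lsc_const_mul (hlsc a) (hμ a (Finset.mem_cons_self a s))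
      have h2 := ih fun t ht => hμ t (Finset.mem_cons_of_mem ht)
      have h3 := h1.add' h2 (fun x => EReal.continuousAt_add
        (Or.inr (sum_ne_bot fun t ht => term_ne_bot (hμ t (Finset.mem_cons_of_mem ht)) (hft t x)))
        (Or.inl (term_ne_bot (hμ a (Finset.mem_cons_self a s)) (hft a x))))
      simpa only [Finset.sum_cons] using h3

lemma epi_zero_convex : Convex ℝ {p : X × ℝ | (0 : EReal) ≤ (p.2 : EReal)} := by
  rintro ⟨y1, s1⟩ hp1 ⟨y2, s2⟩ hp2 a b ha hb hab
  simp only [mem_setOf_eq, EReal.coe_nonneg] at hp1 hp2 ⊢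
  have : (0:ℝ) ≤ a * s1 + b * s2 := by positivity
  simpa using this

lemma epi_add_convex {g h : X → EReal} (hgb : ∀ x, g x ≠ ⊥) (hhb : ∀ x, h x ≠ ⊥)
    (cg : Convex ℝ {p : X × ℝ | g p.1 ≤ (p.2 : EReal)})
    (ch : Convex ℝ {p : X × ℝ | h p.1 ≤ (p.2 : EReal)}) :
    Convex ℝ {p : X × ℝ | g p.1 + h p.1 ≤ (p.2 : EReal)} := by
  rintro ⟨y1, s1⟩ hp1 ⟨y2, s2⟩ hp2 a b ha hb hab
  simp only [mem_setOf_eq] at hp1 hp2 ⊢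
  have hg1t : g y1 ≠ ⊤ := fun hh' => by
    rw [hh', EReal.top_add_of_ne_bot (hhb y1)] at hp1
    exact (EReal.coe_lt_top s1).not_ge hp1
  have hh1t : h y1 ≠ ⊤ := fun hh' => by
    rw [hh', EReal.add_top_of_ne_bot (hgb y1)] at hp1
    exact (EReal.coe_lt_top s1).not_ge hp1
  have hg2t : g y2 ≠ ⊤ := fun hh' => by
    rw [hh', EReal.top_add_of_ne_bot (hhb y2)] at hp2
    exact (EReal.coe_lt_top s2).not_ge hp2
  have hh2t : h y2 ≠ ⊤ := fun hh' => by
    rw [hh', EReal.add_top_of_ne_bot (hgb y2)] at hp2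
    exact (EReal.coe_lt_top s2).not_ge hp2
  have hG1 : ((g y1).toReal : EReal) = g y1 := EReal.coe_toReal hg1t (hgb y1)
  have hH1 : ((h y1).toReal : EReal) = h y1 := EReal.coe_toReal hh1t (hhb y1)
  have hG2 : ((g y2).toReal : EReal) = g y2 := EReal.coe_toReal hg2t (hgb y2)
  have hH2 : ((h y2).toReal : EReal) = h y2 := EReal.coe_toReal hh2t (hhb y2)
  set G1 := (g y1).toReal; set H1 := (h y1).toReal
  set G2 := (g y2).toReal; set H2 := (h y2).toReal
  have hs1 : G1 + H1 ≤ s1 := by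
    rw [← EReal.coe_le_coe_iff, EReal.coe_add, hG1, hH1]; exact hp1
  have hs2 : G2 + H2 ≤ s2 := by
    rw [← EReal.coe_le_coe_iff, EReal.coe_add, hG2, hH2]; exact hp2
  have m1g : ((y1, G1) : X × ℝ) ∈ {p : X × ℝ | g p.1 ≤ (p.2 : EReal)} := le_of_eq hG1.symm
  have m2g : ((y2, G2) : X × ℝ) ∈ {p : X × ℝ | g p.1 ≤ (p.2 : EReal)} := le_of_eq hG2.symm
  have m1h : ((y1, H1) : X × ℝ) ∈ {p : X × ℝ | h p.1 ≤ (p.2 : EReal)} := le_of_eq hH1.symm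
  have m2h : ((y2, H2) : X × ℝ) ∈ {p : X × ℝ | h p.1 ≤ (p.2 : EReal)} := le_of_eq hH2.symm
  have cG := cg m1g m2g ha hb hab
  have cH := ch m1h m2h ha hb hab
  simp only [Prod.smul_mk, Prod.mk_add_mk, smul_eq_mul, mem_setOf_eq] at cG cH ⊢
  calc g (a • y1 + b • y2) + h (a • y1 + b • y2)
      ≤ ((a * G1 + b * G2 : ℝ) : EReal) + ((a * H1 + b * H2 : ℝ) : EReal) := add_le_add cG cH
    _ = ((a * G1 + b * G2 + (a * H1 + b * H2) : ℝ) : EReal) := (EReal.coe_add _ _).symm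
    _ ≤ ((a * s1 + b * s2 : ℝ) : EReal) := by
        rw [EReal.coe_le_coe_iff]
        nlinarith [mul_le_mul_of_nonneg_left hs1 ha, mul_le_mul_of_nonneg_left hs2 hb]

lemma epi_smul_convex {g : X → EReal} {c : ℝ} (hc : 0 ≤ c)
    (cg : Convex ℝ {p : X × ℝ | g p.1 ≤ (p.2 : EReal)}) :
    Convex ℝ {p : X × ℝ | (c : EReal) * g p.1 ≤ (p.2 : EReal)} := by
  rcases hc.eq_or_lt with h | h
  · simp only [← h, EReal.coe_zero, zero_mul]; exact epi_zero_convex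
  · have hc0 : (0 : EReal) < (c : EReal) := EReal.coe_pos.2 h
    have key : ∀ (y : X) (s : ℝ), ((c : EReal) * g y ≤ (s : EReal)) ↔ g y ≤ (s : EReal) / (c : EReal) := by
      intro y s
      rw [EReal.le_div_iff_mul_le hc0 (EReal.coe_ne_top c), mul_comm]
    have hdiv : ∀ s : ℝ, (s : EReal) / (c : EReal) = ((s / c : ℝ) : EReal) := by
      intro s
      rw [div_eq_mul_inv, div_eq_mul_inv, EReal.coe_mul, EReal.coe_inv]
    rintro ⟨y1, s1⟩ hp1 ⟨y2, s2⟩ hp2 a b ha hb hab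
    simp only [mem_setOf_eq] at hp1 hp2 ⊢
    rw [key, hdiv] at hp1 hp2
    have m1 : ((y1, s1 / c) : X × ℝ) ∈ {p : X × ℝ | g p.1 ≤ (p.2 : EReal)} := hp1
    have m2 : ((y2, s2 / c) : X × ℝ) ∈ {p : X × ℝ | g p.1 ≤ (p.2 : EReal)} := hp2
    have cG := cg m1 m2 ha hb hab
    simp only [Prod.smul_mk, Prod.mk_add_mk, smul_eq_mul, mem_setOf_eq] at cG ⊢
    rw [key, hdiv]
    have heq : (a * s1 + b * s2) / c = a * (s1 / c) + b * (s2 / c) := by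
      field_simp
    rw [heq]
    exact cG

lemma epi_sum_convex {T : Type*} (ft : T → X → EReal) (hft : ∀ t x, ft t x ≠ ⊥)
    (hconv : ∀ t, Convex ℝ {p : X × ℝ | ft t p.1 ≤ (p.2 : EReal)})
    (H : Finset T) (μ : T → ℝ) (hμ : ∀ t ∈ H, 0 ≤ μ t) :
    Convex ℝ {p : X × ℝ | (∑ t ∈ H, (μ t : EReal) * ft t p.1) ≤ (p.2 : EReal)} := by
  induction H using Finset.cons_induction with
  | empty => simp only [Finset.sum_empty]; exact epi_zero_convex
  | cons a s ha ih =>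
      have h1 : Convex ℝ {p : X × ℝ | (μ a : EReal) * ft a p.1 ≤ (p.2 : EReal)} :=
        epi_smul_convex (hμ a (Finset.mem_cons_self a s)) (hconv a)
      have h2 := ih fun t ht => hμ t (Finset.mem_cons_of_mem ht)
      have h3 := epi_add_convex (g := fun x => (μ a : EReal) * ft a x)
        (h := fun x => ∑ t ∈ s, (μ t : EReal) * ft t x)
        (fun x => term_ne_bot (hμ a (Finset.mem_cons_self a s)) (hft a x))
        (fun x => sum_ne_bot fun t ht => term_ne_bot (hμ t (Finset.mem_cons_of_mem ht)) (hft t x))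
        h1 h2
      simpa only [Finset.sum_cons] using h3

section FM

variable [IsTopologicalAddGroup X] [ContinuousSMul ℝ X] [LocallyConvexSpace ℝ X]

lemma sep {g : X → EReal} (hconv : Convex ℝ {p : X × ℝ | g p.1 ≤ (p.2 : EReal)})
    (hlsc : LowerSemicontinuous g) {x : X} {r : ℝ} (hr : (r : EReal) < g x) :
    ∃ (q : X →L[ℝ] ℝ) (β u : ℝ),
      (∀ (y : X) (s : ℝ), g y ≤ (s : EReal) → q y + β * s < u) ∧ u < q x + β * r := by
  have hcl : IsClosed {p : X × ℝ | g p.1 ≤ (p.2 : EReal)} := by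
    have hset : {p : X × ℝ | g p.1 ≤ (p.2 : EReal)} =
        (fun p : X × ℝ => (p.1, (p.2 : EReal))) ⁻¹' {p : X × EReal | g p.1 ≤ p.2} := rfl
    rw [hset]
    exact hlsc.isClosed_epigraph.preimage
      (continuous_fst.prodMk (continuous_coe_real_ereal.comp continuous_snd))
  have hx : ((x, r) : X × ℝ) ∉ {p : X × ℝ | g p.1 ≤ (p.2 : EReal)} := fun hxx => hr.not_ge hxx
  obtain ⟨l, u, hl, hu⟩ := geometric_hahn_banach_closed_point hconv hcl hx
  have hdecomp : ∀ (y : X) (s : ℝ), l (y, s) = l (y, 0) + l ((0 : X), (1 : ℝ)) * s := by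
    intro y s
    have hys : ((y, s) : X × ℝ) = (y, 0) + s • ((0 : X), (1 : ℝ)) := by
      rw [Prod.smul_mk, smul_zero, smul_eq_mul, mul_one, Prod.mk_add_mk, add_zero, zero_add]
    rw [hys, map_add, map_smul, smul_eq_mul, mul_comm]
  refine ⟨l.comp (ContinuousLinearMap.inl ℝ X ℝ), l ((0 : X), (1 : ℝ)), u, ?_, ?_⟩
  · intro y s hs
    have hmem : ((y, s) : X × ℝ) ∈ {p : X × ℝ | g p.1 ≤ (p.2 : EReal)} := hs
    have := hl _ hmem
    rw [hdecomp y s] at this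
    simpa [ContinuousLinearMap.comp_apply] using this
  · have := hu
    rw [hdecomp x r] at this
    simpa [ContinuousLinearMap.comp_apply] using this

lemma minorant_of_sep {g : X → EReal} (hb : ∀ y, g y ≠ ⊥)
    {q : X →L[ℝ] ℝ} {β u : ℝ} (hβ : β < 0)
    (hsep : ∀ (y : X) (s : ℝ), g y ≤ (s : EReal) → q y + β * s < u) :
    ∀ y, (((q y - u) / (-β) : ℝ) : EReal) ≤ g y := by
  intro y
  rcases eq_or_ne (g y) ⊤ with hy | hy
  · rw [hy]; exact le_top
  · have hyr : ((g y).toReal : EReal) = g y := EReal.coe_toReal hy (hb y)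
    have h1 := hsep y (g y).toReal (le_of_eq hyr.symm)
    rw [← hyr, EReal.coe_le_coe_iff, div_le_iff₀ (neg_pos.2 hβ)]
    nlinarith

lemma exists_minorant {g : X → EReal} (hb : ∀ y, g y ≠ ⊥)
    (hconv : Convex ℝ {p : X × ℝ | g p.1 ≤ (p.2 : EReal)})
    (hlsc : LowerSemicontinuous g)
    {x0 : X} (hx0 : g x0 ≠ ⊤) (x : X) (r : ℝ) (hr : (r : EReal) < g x) :
    ∃ (q : X →L[ℝ] ℝ) (A : ℝ),
      (∀ y, ((A + q y : ℝ) : EReal) ≤ g y) ∧ r ≤ A + q x := by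
  -- base affine minorant
  have hx0r : ((g x0).toReal : EReal) = g x0 := EReal.coe_toReal hx0 (hb x0)
  set t0 := (g x0).toReal with ht0
  have hbase : ∃ (q0 : X →L[ℝ] ℝ) (A0 : ℝ), ∀ y, ((A0 + q0 y : ℝ) : EReal) ≤ g y := by
    have hr0 : ((t0 - 1 : ℝ) : EReal) < g x0 := by
      rw [← hx0r, EReal.coe_lt_coe_iff]; linarith
    obtain ⟨q1, β1, u1, hsep1, hpt1⟩ := sep hconv hlsc hr0
    have hβ1 : β1 < 0 := by
      have h1 := hsep1 x0 t0 (le_of_eq hx0r.symm)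
      nlinarith
    have hβ1ne : β1 ≠ 0 := hβ1.ne
    refine ⟨(-β1)⁻¹ • q1, -u1 / (-β1), fun y => ?_⟩
    have := minorant_of_sep hb hβ1 hsep1 y
    have hform : -u1 / (-β1) + ((-β1)⁻¹ • q1) y = (q1 y - u1) / (-β1) := by
      simp only [ContinuousLinearMap.smul_apply, smul_eq_mul, inv_mul_eq_div]
      rw [← add_div]; congr 1; ring
    rwa [hform]
  obtain ⟨q0, A0, hbase⟩ := hbase
  obtain ⟨q, β, u, hsep, hpt⟩ := sep hconv hlsc hr
  have hβle : β ≤ 0 := by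
    by_contra hβ
    push_neg at hβ
    obtain ⟨s, hs1, hs2⟩ : ∃ s : ℝ, t0 ≤ s ∧ (u - q x0) / β < s :=
      ⟨max t0 ((u - q x0) / β + 1), le_max_left _ _, by
        have := le_max_right t0 ((u - q x0) / β + 1); linarith⟩
    have h1 : g x0 ≤ (s : EReal) := by
      rw [← hx0r, EReal.coe_le_coe_iff]; exact hs1
    have h2 := hsep x0 s h1
    rw [div_lt_iff₀ hβ] at hs2
    nlinarith
  rcases hβle.lt_or_eq with hβ | hβ
  · -- β < 0
    have hβne : β ≠ 0 := hβ.ne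
    refine ⟨(-β)⁻¹ • q, -u / (-β), fun y => ?_, ?_⟩
    · have hform : -u / (-β) + ((-β)⁻¹ • q) y = (q y - u) / (-β) := by
        simp only [ContinuousLinearMap.smul_apply, smul_eq_mul, inv_mul_eq_div]
        rw [← add_div]; congr 1; ring
      rw [hform]
      exact minorant_of_sep hb hβ hsep y
    · have hform : -u / (-β) + ((-β)⁻¹ • q) x = (q x - u) / (-β) := by
        simp only [ContinuousLinearMap.smul_apply, smul_eq_mul, inv_mul_eq_div]
        rw [← add_div]; congr 1; ring
      rw [hform, le_div_iff₀ (neg_pos.2 hβ)]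
      nlinarith
  · -- β = 0
    rw [hβ] at hsep hpt
    simp only [zero_mul, add_zero] at hsep hpt
    have hxu : u < q x := hpt
    set c := max 0 ((r - (A0 + q0 x)) / (q x - u)) with hc
    have hc0 : 0 ≤ c := le_max_left _ _
    refine ⟨q0 + c • q, A0 - c * u, fun y => ?_, ?_⟩
    · rcases eq_or_ne (g y) ⊤ with hy | hy
      · rw [hy]; exact le_top
      · have hyr : ((g y).toReal : EReal) = g y := EReal.coe_toReal hy (hb y)
        have h2 : q y < u := hsep y (g y).toReal (le_of_eq hyr.symm)
        have h1 : A0 + q0 y ≤ (g y).toReal := by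
          rw [← EReal.coe_le_coe_iff, hyr]; exact hbase y
        rw [← hyr, EReal.coe_le_coe_iff]
        simp only [ContinuousLinearMap.add_apply, ContinuousLinearMap.smul_apply, smul_eq_mul]
        nlinarith [mul_nonneg hc0 (sub_nonneg.2 h2.le)]
    · have hqxu : 0 < q x - u := by linarith
      have h1 : (r - (A0 + q0 x)) / (q x - u) ≤ c := le_max_right _ _
      have h2 := mul_le_mul_of_nonneg_right h1 hqxu.le
      rw [div_mul_cancel₀ _ hqxu.ne'] at h2
      simp only [ContinuousLinearMap.add_apply, ContinuousLinearMap.smul_apply, smul_eq_mul]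
      linarith

end FM

end ConjProofAux

section Main

open ConjProofAux Set

variable {X : Type*} [AddCommGroup X] [Module ℝ X] [TopologicalSpace X]
  [IsTopologicalAddGroup X] [ContinuousSMul ℝ X] [LocallyConvexSpace ℝ X]

lemma biconj_ge {g : X → EReal} (hb : ∀ y, g y ≠ ⊥)
    (hconv : Convex ℝ {p : X × ℝ | g p.1 ≤ (p.2 : EReal)})
    (hlsc : LowerSemicontinuous g) (x : X) :
    g x ≤ ⨆ p : WeakDual ℝ X, ((p x : ℝ) : EReal) - conjFn g p := by
  by_cases htop : ∀ y, g y = ⊤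
  · have h0 : conjFn g (0 : WeakDual ℝ X) = ⊥ := by
      rw [conjFn]
      have hterm : ∀ y : X, (((0 : WeakDual ℝ X) y : ℝ) : EReal) - g y = ⊥ := fun y => by
        rw [htop y, EReal.sub_top]
      haveI : Nonempty X := ⟨0⟩
      simp only [hterm, iSup_const]
    have h1 : (((0 : WeakDual ℝ X) x : ℝ) : EReal) - conjFn g (0 : WeakDual ℝ X) = ⊤ := by
      rw [h0]
      have : ((0 : WeakDual ℝ X) x : ℝ) = 0 := rfl
      rw [this, EReal.coe_sub_bot]
    calc g x ≤ ⊤ := le_top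
      _ = (((0 : WeakDual ℝ X) x : ℝ) : EReal) - conjFn g (0 : WeakDual ℝ X) := h1.symm
      _ ≤ _ := le_iSup (fun p : WeakDual ℝ X => ((p x : ℝ) : EReal) - conjFn g p) 0
  · push_neg at htop
    obtain ⟨x0, hx0⟩ := htop
    by_contra hlt
    push_neg at hlt
    obtain ⟨r, hr1, hr2⟩ := EReal.exists_between_coe_real hlt
    obtain ⟨q, A, hmin, hrx⟩ := exists_minorant hb hconv hlsc hx0 x r hr2
    set p : WeakDual ℝ X := q with hp
    have happ : ∀ y, (p y : ℝ) = q y := fun _ => rfl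
    have hconj : conjFn g p ≤ ((-A : ℝ) : EReal) := by
      rw [conjFn]
      apply iSup_le
      intro y
      calc ((p y : ℝ) : EReal) - g y
          ≤ ((q y : ℝ) : EReal) - ((A + q y : ℝ) : EReal) := by
            rw [happ]; exact EReal.sub_le_sub le_rfl (hmin y)
        _ = ((q y - (A + q y) : ℝ) : EReal) := (EReal.coe_sub _ _).symm
        _ = ((-A : ℝ) : EReal) := by norm_num
    have hkey : ((A + q x : ℝ) : EReal) ≤ ((p x : ℝ) : EReal) - conjFn g p := by
      calc ((A + q x : ℝ) : EReal) = ((q x - -A : ℝ) : EReal) := by rw [sub_neg_eq_add, add_comm]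
        _ = ((q x : ℝ) : EReal) - ((-A : ℝ) : EReal) := EReal.coe_sub _ _
        _ ≤ ((p x : ℝ) : EReal) - conjFn g p := by
            rw [happ]; exact EReal.sub_le_sub le_rfl hconj
    have hfin : (r : EReal) ≤ ⨆ p : WeakDual ℝ X, ((p x : ℝ) : EReal) - conjFn g p :=
      le_trans (EReal.coe_le_coe_iff.2 hrx) (hkey.trans (le_iSup (fun p : WeakDual ℝ X => ((p x : ℝ) : EReal) - conjFn g p) p))
    exact (hr1.trans_le hfin).false

end Main

set_option maxHeartbeats 2000000 in
theorem conj_phiH_eq {X T : Type*} [AddCommGroup X] [Module ℝ X] [TopologicalSpace X]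
    [IsTopologicalAddGroup X] [ContinuousSMul ℝ X] [LocallyConvexSpace ℝ X] [T2Space X]
    (f : X → EReal) (ft : T → X → EReal)
    (hf : ∀ x, f x ≠ ⊥) (hfprop : ∃ x, f x ≠ ⊤)
    (hft : ∀ t x, ft t x ≠ ⊥) (hftprop : ∀ t, ∃ x, ft t x ≠ ⊤)
    (hfconv : Convex ℝ {p : X × ℝ | f p.1 ≤ (p.2 : EReal)})
    (hftconv : ∀ t, Convex ℝ {p : X × ℝ | ft t p.1 ≤ (p.2 : EReal)})
    (hflsc : LowerSemicontinuous f) (hftlsc : ∀ t, LowerSemicontinuous (ft t))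
    (𝓗 : Set (Finset T)) (h𝓗ne : 𝓗.Nonempty) (h𝓗mem : ∀ H ∈ 𝓗, H.Nonempty)
    (hcov : ∀ t : T, ∃ H ∈ 𝓗, t ∈ H) :
    conjBack (phiH f ft 𝓗) = fPlusIndicator f ft := by
  classical
  have hμ0 : ∀ (H : Finset T) (μ : T → ℝ), (∀ t ∈ H, 0 ≤ μ t) →
      ∀ x, lagFn f ft H μ x ≠ ⊥ := by
    intro H μ hμ x
    rw [lagFn, Ne, EReal.add_eq_bot_iff]
    push_neg
    exact ⟨hf x, ConjProofAux.sum_ne_bot fun t ht => ConjProofAux.term_ne_bot (hμ t ht) (hft t x)⟩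
  have hlaglsc : ∀ (H : Finset T) (μ : T → ℝ), (∀ t ∈ H, 0 ≤ μ t) →
      LowerSemicontinuous (lagFn f ft H μ) := by
    intro H μ hμ
    have h3 := hflsc.add' (ConjProofAux.lsc_sum ft hft hftlsc H μ hμ) (fun x =>
      EReal.continuousAt_add
        (Or.inr (ConjProofAux.sum_ne_bot fun t ht => ConjProofAux.term_ne_bot (hμ t ht) (hft t x)))
        (Or.inl (hf x)))
    exact h3
  have hlagconv : ∀ (H : Finset T) (μ : T → ℝ), (∀ t ∈ H, 0 ≤ μ t) →
      Convex ℝ {p : X × ℝ | lagFn f ft H μ p.1 ≤ (p.2 : EReal)} := by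
    intro H μ hμ
    have h3 := ConjProofAux.epi_add_convex (g := f)
      (h := fun x => ∑ t ∈ H, (μ t : EReal) * ft t x) hf
      (fun x => ConjProofAux.sum_ne_bot fun t ht => ConjProofAux.term_ne_bot (hμ t ht) (hft t x))
      hfconv (ConjProofAux.epi_sum_convex ft hft hftconv H μ hμ)
    exact h3
  funext x
  apply le_antisymm
  · -- ≤ direction
    rw [conjBack]
    apply iSup_le
    intro p
    rw [fPlusIndicator]
    split_ifs with hx
    · apply ConjProofAux.sub_le_of_key (p x) _ (f x) (hf x)
      rw [phiH]
      refine le_iInf₂ fun H hH => le_iInf fun μ => ?_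
      have h1 : lagFn f ft H μ.1 x ≤ f x := by
        rw [lagFn]
        have hsum : (∑ t ∈ H, (μ.1 t : EReal) * ft t x) ≤ 0 :=
          Finset.sum_nonpos fun t ht => by
            calc (μ.1 t : EReal) * ft t x ≤ (μ.1 t : EReal) * 0 :=
                  mul_le_mul_of_nonneg_left (hx t) (EReal.coe_nonneg.2 (μ.2 t ht))
              _ = 0 := mul_zero _
        calc f x + (∑ t ∈ H, (μ.1 t : EReal) * ft t x) ≤ f x + 0 := add_le_add_right hsum _
          _ = f x := add_zero _
      calc ((p x : ℝ) : EReal) - f x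
          ≤ ((p x : ℝ) : EReal) - lagFn f ft H μ.1 x := EReal.sub_le_sub le_rfl h1
        _ ≤ conjFn (lagFn f ft H μ.1) p :=
            le_iSup (fun y => ((p y : ℝ) : EReal) - lagFn f ft H μ.1 y) x
    · exact le_top
  · -- ≥ direction
    have key : ∀ H ∈ 𝓗, ∀ μ : T → ℝ, (∀ t ∈ H, 0 ≤ μ t) →
        lagFn f ft H μ x ≤ conjBack (phiH f ft 𝓗) x := by
      intro H hH μ hμ
      have h1 := biconj_ge (hμ0 H μ hμ) (hlagconv H μ hμ) (hlaglsc H μ hμ) x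
      refine h1.trans ?_
      rw [conjBack]
      refine iSup_mono fun p => EReal.sub_le_sub le_rfl ?_
      rw [phiH]
      exact iInf_le_of_le H (iInf_le_of_le hH (iInf_le
        (fun μ' : {μ' : T → ℝ // ∀ t ∈ H, 0 ≤ μ' t} => conjFn (lagFn f ft H μ'.1) p) ⟨μ, hμ⟩))
    rw [fPlusIndicator]
    split_ifs with hx
    · obtain ⟨H, hH⟩ := h𝓗ne
      have h1 := key H hH 0 fun t _ => le_rfl
      calc f x = lagFn f ft H 0 x := by simp [lagFn]
        _ ≤ _ := h1
    · push_neg at hx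
      obtain ⟨t, ht⟩ := hx
      obtain ⟨H, hH, htH⟩ := hcov t
      refine le_of_not_gt fun hlt => ?_
      obtain ⟨M, hM1, _⟩ := EReal.exists_between_coe_real hlt
      have hex : ∃ c : ℝ, 0 ≤ c ∧ (M : EReal) ≤ f x + (c : EReal) * ft t x := by
        rcases eq_or_ne (f x) ⊤ with hfx | hfx
        · exact ⟨0, le_rfl, by simp [hfx]⟩
        · have hfx' : ((f x).toReal : EReal) = f x := EReal.coe_toReal hfx (hf x)
          rcases eq_or_ne (ft t x) ⊤ with hft' | hft'
          · refine ⟨1, zero_le_one, ?_⟩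
            rw [hft', EReal.coe_one, one_mul, EReal.add_top_of_ne_bot (hf x)]
            exact le_top
          · have hv : ((ft t x).toReal : EReal) = ft t x := EReal.coe_toReal hft' (hft t x)
            set a := (f x).toReal
            set v := (ft t x).toReal
            have hv0 : 0 < v := by
              rw [← hv] at ht
              exact EReal.coe_pos.1 ht
            refine ⟨max 0 ((M - a) / v), le_max_left _ _, ?_⟩
            rw [← hfx', ← hv, ← EReal.coe_mul, ← EReal.coe_add, EReal.coe_le_coe_iff]
            have h1 : (M - a) / v ≤ max 0 ((M - a) / v) := le_max_right _ _
            have h2 := mul_le_mul_of_nonneg_right h1 hv0.le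
            rw [div_mul_cancel₀ _ hv0.ne'] at h2
            linarith
      obtain ⟨c, hc, hMle⟩ := hex
      set μM : T → ℝ := fun s => if s = t then c else 0 with hμM
      have hμnn : ∀ s ∈ H, 0 ≤ μM s := fun s _ => by
        rw [hμM]; dsimp only; split_ifs; exacts [hc, le_rfl]
      have hsum : (∑ s ∈ H, (μM s : EReal) * ft s x) = (c : EReal) * ft t x := by
        rw [Finset.sum_eq_single_of_mem t htH]
        · simp [hμM]
        · intro s hs hst
          simp [hμM, hst]
      have hlag := key H hH μM hμnn
      rw [lagFn] at hlag
      rw [hsum] at hlag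
      exact hM1.not_ge (hMle.trans hlag)
end

section
/- 𝓗-stable strong duality implies closedness: if for every x* ∈ X* the value (f + δ_E)^*(x*) equals min_{H∈𝓗, μ∈ℝ₊^H} (f + ∑_{t∈H} μ_t f_t)^*(x*) (minimum attained), then 𝓐_𝓗 is w*-closed convex regarding {x*}×ℝ for every x*, i.e., (closure of co 𝓐_𝓗) ∩ ({x*}×ℝ) = 𝓐_𝓗 ∩ ({x*}×ℝ). -/
open scoped BigOperators Pointwise
open Classical

section Aux

variable {X T : Type*} [AddCommGroup X] [Module ℝ X] [TopologicalSpace X]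

lemma conjFn_antitone {g h : X → EReal} (hgh : ∀ x, g x ≤ h x) (p : WeakDual ℝ X) :
    conjFn h p ≤ conjFn g p :=
  iSup_mono fun x => EReal.sub_le_sub le_rfl (hgh x)

lemma lag_le_fPlus (f : X → EReal) (ft : T → X → EReal)
    (H : Finset T) (μ : T → ℝ) (hμ : ∀ t ∈ H, 0 ≤ μ t) (x : X) :
    lagFn f ft H μ x ≤ fPlusIndicator f ft x := by
  unfold lagFn fPlusIndicator
  split_ifs with hx
  · have hs : ∑ t ∈ H, ((μ t : EReal) * ft t x) ≤ 0 :=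
      Finset.sum_nonpos fun t ht =>
        mul_nonpos_of_nonneg_of_nonpos (by exact_mod_cast hμ t ht) (hx t)
    calc f x + ∑ t ∈ H, ((μ t : EReal) * ft t x) ≤ f x + 0 := add_le_add le_rfl hs
    _ = f x := add_zero _
  · exact le_top

lemma slice_closed_convex (x : X) (c : EReal) :
    IsClosed {q : WeakDual ℝ X × ℝ | ((q.1 x : ℝ) : EReal) - c ≤ ((q.2 : ℝ) : EReal)} ∧
    Convex ℝ {q : WeakDual ℝ X × ℝ | ((q.1 x : ℝ) : EReal) - c ≤ ((q.2 : ℝ) : EReal)} := by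
  induction c using EReal.rec with
  | bot =>
    have he : {q : WeakDual ℝ X × ℝ | ((q.1 x : ℝ) : EReal) - (⊥ : EReal) ≤ ((q.2 : ℝ) : EReal)}
        = (∅ : Set (WeakDual ℝ X × ℝ)) := by
      ext q
      simp [EReal.sub_bot (EReal.coe_ne_bot _), top_le_iff, EReal.coe_ne_top]
    rw [he]; exact ⟨isClosed_empty, convex_empty⟩
  | coe c =>
    have he : {q : WeakDual ℝ X × ℝ | ((q.1 x : ℝ) : EReal) - ((c : ℝ) : EReal) ≤ ((q.2 : ℝ) : EReal)}
        = {q : WeakDual ℝ X × ℝ | q.1 x - q.2 ≤ c} := by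
      ext q
      rw [Set.mem_setOf_eq, ← EReal.coe_sub, EReal.coe_le_coe_iff, Set.mem_setOf_eq]
      constructor <;> intro h <;> linarith
    rw [he]
    have hlin : IsLinearMap ℝ (fun q : WeakDual ℝ X × ℝ => q.1 x - q.2) := by
      constructor
      · intro a b
        show (a.1 + b.1) x - (a.2 + b.2) = _
        change a.1 x + b.1 x - (a.2 + b.2) = _
        ring
      · intro r a
        show (r • a.1) x - r * a.2 = r * (a.1 x - a.2)
        change r * a.1 x - r * a.2 = _
        ring
    have hcont : Continuous (fun q : WeakDual ℝ X × ℝ => q.1 x - q.2) :=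
      ((WeakDual.eval_continuous x).comp continuous_fst).sub continuous_snd
    exact ⟨IsClosed.preimage hcont isClosed_Iic, convex_halfSpace_le hlin c⟩
  | top =>
    have he : {q : WeakDual ℝ X × ℝ | ((q.1 x : ℝ) : EReal) - (⊤ : EReal) ≤ ((q.2 : ℝ) : EReal)}
        = (Set.univ : Set (WeakDual ℝ X × ℝ)) := by
      ext q; simp [EReal.sub_top]
    rw [he]; exact ⟨isClosed_univ, convex_univ⟩

lemma epiConj_closed_convex (g : X → EReal) :
    IsClosed (epiConj g) ∧ Convex ℝ (epiConj g) := by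
  have heq : epiConj g =
      ⋂ x : X, {q : WeakDual ℝ X × ℝ | ((q.1 x : ℝ) : EReal) - g x ≤ ((q.2 : ℝ) : EReal)} := by
    ext q
    simp [epiConj, conjFn, iSup_le_iff]
  rw [heq]
  exact ⟨isClosed_iInter fun x => (slice_closed_convex x (g x)).1,
    convex_iInter fun x => (slice_closed_convex x (g x)).2⟩

end Aux

theorem stable_strong_duality_implies_sectionwise_closed_convex {X T : Type*}
    [AddCommGroup X] [Module ℝ X] [TopologicalSpace X]
    (f : X → EReal) (ft : T → X → EReal)
    (hf : ∀ x, f x ≠ ⊥) (hfprop : ∃ x, f x ≠ ⊤)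
    (hft : ∀ t x, ft t x ≠ ⊥) (hftprop : ∀ t, ∃ x, ft t x ≠ ⊤)
    (𝓗 : Set (Finset T)) (h𝓗ne : 𝓗.Nonempty) (h𝓗mem : ∀ H ∈ 𝓗, H.Nonempty)
    (hstable : ∀ p : WeakDual ℝ X, ∃ H ∈ 𝓗, ∃ μ : T → ℝ, (∀ t ∈ H, 0 ≤ μ t) ∧
      conjFn (lagFn f ft H μ) p = conjFn (fPlusIndicator f ft) p) :
    ∀ xs : WeakDual ℝ X,
      closure (convexHull ℝ (ASet f ft 𝓗)) ∩ ({xs} ×ˢ (Set.univ : Set ℝ)) =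
        ASet f ft 𝓗 ∩ ({xs} ×ˢ (Set.univ : Set ℝ)) := by
  intro xs
  have hA : ASet f ft 𝓗 ⊆ epiConj (fPlusIndicator f ft) := by
    rintro q ⟨H, hH, μ, hμ, hq⟩
    exact le_trans (conjFn_antitone (lag_le_fPlus f ft H μ hμ) q.1) hq
  obtain ⟨hcl, hcv⟩ := epiConj_closed_convex (fPlusIndicator f ft)
  have hsub : closure (convexHull ℝ (ASet f ft 𝓗)) ⊆ epiConj (fPlusIndicator f ft) :=
    closure_minimal (convexHull_min hA hcv) hcl
  apply Set.Subset.antisymm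
  · rintro ⟨q1, q2⟩ ⟨hq, hq1, -⟩
    have hq1' : q1 = xs := hq1
    subst hq1'
    have h1 : conjFn (fPlusIndicator f ft) q1 ≤ ((q2 : ℝ) : EReal) := hsub hq
    obtain ⟨H, hH, μ, hμ, heq2⟩ := hstable q1
    refine ⟨⟨H, hH, μ, hμ, ?_⟩, rfl, trivial⟩
    show conjFn (lagFn f ft H μ) q1 ≤ ((q2 : ℝ) : EReal)
    rw [heq2]; exact h1
  · rintro q ⟨hq, hq2⟩
    exact ⟨subset_closure (subset_convexHull ℝ _ hq), hq2⟩
end
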